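/- arXiv:2312.04950 — 3 statements merged into one kernel-verified Lean document; each statement's English description precedes it below -/
import Mathlib

section
/- Let X_1,…,X_n be an IID bounded sequence with constants c_1, δ_1, c_2, δ_2 (c_1, c_2 > 0) and IID bounding sequence Y_1,…,Y_n, and suppose the values X_1,…,X_n are pairwise distinct and the values Y_1,…,Y_n are pairwise distinct. Then for every α ∈ (0,1) with n·α ∈ ℕ, the empirical upper quantile functions satisfy c_1·Q̂_{Y_n}(α) + δ_1 ≤ Q̂_{X_n}(α) ≤ c_2·Q̂_{Y_n}(α) + δ_2. -/
open MeasureTheory ProbabilityTheory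

/-- Distribution function `F(x) = P(X ≤ x)` of a real random variable. -/
noncomputable def distFun {Ω : Type*} [MeasurableSpace Ω] (μ : Measure Ω) (X : Ω → ℝ) :
    ℝ → ℝ :=
  fun x => (μ {ω | X ω ≤ x}).toReal

/-- Upper quantile function `Q(p) = sup {x : F x ≤ p}`. -/
noncomputable def upperQuantile (F : ℝ → ℝ) (p : ℝ) : ℝ :=
  sSup {x | F x ≤ p}

/-- Lower quantile function `Q⁻(p) = sup {x : F x < p}`. -/
noncomputable def lowerQuantile (F : ℝ → ℝ) (p : ℝ) : ℝ :=
  sSup {x | F x < p}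

/-- Empirical distribution function of the observations `z 1, …, z i`. -/
noncomputable def empDistFun (z : ℕ → ℝ) (i : ℕ) : ℝ → ℝ :=
  fun x => (1 / (i : ℝ)) * ∑ j ∈ Finset.Icc 1 i, (if z j ≤ x then (1 : ℝ) else 0)

/-- The boundary `g_i = 0.85 √((1/i)(log log (e i) + 0.8 log (1612/δ)))`. -/
noncomputable def gBound (δ : ℝ) (i : ℕ) : ℝ :=
  0.85 * Real.sqrt ((1 / (i : ℝ)) *
    (Real.log (Real.log (Real.exp 1 * i)) + 0.8 * Real.log (1612 / δ)))

lemma upperQuantile_emp_mono (z w : ℕ → ℝ) (n : ℕ) (hn : 1 ≤ n) (c δ α : ℝ) (hc : 0 < c)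
    (hα0 : 0 < α) (hα1 : α < 1)
    (h : ∀ j ∈ Finset.Icc 1 n, z j ≤ c * w j + δ) :
    upperQuantile (empDistFun z n) α ≤ c * upperQuantile (empDistFun w n) α + δ := by
  have hS : (Finset.Icc 1 n).Nonempty := Finset.nonempty_Icc.mpr hn
  have hnpos : (0 : ℝ) < n := by exact_mod_cast hn
  -- the set for z is nonempty
  have hAne : ({x | empDistFun z n x ≤ α}).Nonempty := by
    refine ⟨(Finset.Icc 1 n).inf' hS z - 1, ?_⟩
    have : empDistFun z n ((Finset.Icc 1 n).inf' hS z - 1) = 0 := by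
      unfold empDistFun
      rw [Finset.sum_eq_zero, mul_zero]
      intro j hj
      have : ¬ z j ≤ (Finset.Icc 1 n).inf' hS z - 1 := by
        have := Finset.inf'_le z hj
        linarith
      simp [this]
    simp only [Set.mem_setOf_eq, this]
    exact hα0.le
  -- the set for w is bounded above
  have hBbdd : BddAbove ({y | empDistFun w n y ≤ α}) := by
    refine ⟨(Finset.Icc 1 n).sup' hS w, ?_⟩
    intro y hy
    by_contra hlt
    push_neg at hlt
    have hF1 : empDistFun w n y = 1 := by
      unfold empDistFun
      have hterm : ∀ j ∈ Finset.Icc 1 n, (if w j ≤ y then (1:ℝ) else 0) = 1 := by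
        intro j hj
        have : w j ≤ y := le_of_lt (lt_of_le_of_lt (Finset.le_sup' w hj) hlt)
        simp [this]
      rw [Finset.sum_congr rfl hterm, Finset.sum_const, nsmul_eq_mul, Nat.card_Icc,
        Nat.add_sub_cancel]
      field_simp
    have := Set.mem_setOf_eq ▸ hy
    rw [hF1] at this
    linarith
  refine csSup_le hAne (fun x hx => ?_)
  have hxα : empDistFun z n x ≤ α := hx
  set y := (x - δ) / c with hy
  have hcy : c * y + δ = x := by rw [hy]; field_simp; ring
  have hFle : empDistFun w n y ≤ empDistFun z n x := by
    unfold empDistFun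
    refine mul_le_mul_of_nonneg_left (Finset.sum_le_sum fun j hj => ?_) (by positivity)
    by_cases hwj : w j ≤ y
    · have : z j ≤ x := by
        have h1 := h j hj
        have h2 : c * w j ≤ c * y := mul_le_mul_of_nonneg_left hwj hc.le
        linarith
      simp [hwj, this]
    · rw [if_neg hwj]
      split_ifs <;> norm_num
  have hyB : y ∈ {y | empDistFun w n y ≤ α} := le_trans hFle hxα
  have hyle : y ≤ sSup {y | empDistFun w n y ≤ α} := le_csSup hBbdd hyB
  have : c * y ≤ c * sSup {y | empDistFun w n y ≤ α} :=
    mul_le_mul_of_nonneg_left hyle hc.le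
  unfold upperQuantile
  linarith

/-- Lemma `lem:quantile:essentialIID`, upper quantile part: for an IID bounded sequence
`X_1, …, X_n` with bounding sequence `Y_1, …, Y_n` (with pairwise distinct values), for every
`α ∈ (0,1)` with `n·α ∈ ℕ`,
`c₁ Q̂_{Y_n}(α) + δ₁ ≤ Q̂_{X_n}(α) ≤ c₂ Q̂_{Y_n}(α) + δ₂` almost surely. -/
theorem iidBounded_upperQuantile_comparison
    {Ω : Type*} [MeasurableSpace Ω] (μ : Measure Ω) [IsProbabilityMeasure μ]
    (X Y : ℕ → Ω → ℝ) (hXmeas : ∀ i, Measurable (X i)) (hYmeas : ∀ i, Measurable (Y i))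
    (c₁ δ₁ c₂ δ₂ : ℝ) (hc₁ : 0 < c₁) (hc₂ : 0 < c₂)
    (hXindep : iIndepFun X μ)
    (hYindep : iIndepFun Y μ)
    (hYident : ∀ i j, IdentDistrib (Y i) (Y j) μ μ)
    (hbound : ∀ i, ∀ᵐ ω ∂μ, c₁ * Y i ω + δ₁ ≤ X i ω ∧ X i ω ≤ c₂ * Y i ω + δ₂)
    (n : ℕ) (hn : 1 ≤ n)
    (hXdistinct : ∀ᵐ ω ∂μ, ∀ i ∈ Finset.Icc 1 n, ∀ j ∈ Finset.Icc 1 n, i ≠ j → X i ω ≠ X j ω)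
    (hYdistinct : ∀ᵐ ω ∂μ, ∀ i ∈ Finset.Icc 1 n, ∀ j ∈ Finset.Icc 1 n, i ≠ j → Y i ω ≠ Y j ω)
    (α : ℝ) (hα : α ∈ Set.Ioo (0 : ℝ) 1) (hnα : ∃ k : ℕ, (n : ℝ) * α = k) :
    ∀ᵐ ω ∂μ,
      c₁ * upperQuantile (empDistFun (fun j => Y j ω) n) α + δ₁ ≤
          upperQuantile (empDistFun (fun j => X j ω) n) α ∧
        upperQuantile (empDistFun (fun j => X j ω) n) α ≤
          c₂ * upperQuantile (empDistFun (fun j => Y j ω) n) α + δ₂ := by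
  have hall : ∀ᵐ ω ∂μ, ∀ i, c₁ * Y i ω + δ₁ ≤ X i ω ∧ X i ω ≤ c₂ * Y i ω + δ₂ :=
    MeasureTheory.ae_all_iff.mpr hbound
  filter_upwards [hall] with ω hω
  obtain ⟨hα0, hα1⟩ := hα
  constructor
  · have hQ := upperQuantile_emp_mono (fun j => Y j ω) (fun j => X j ω) n hn
      c₁⁻¹ (-δ₁ / c₁) α (by positivity) hα0 hα1 (fun j _ => by
        have h1 := (hω j).1
        have key : c₁ * (c₁⁻¹ * X j ω + -δ₁ / c₁) = X j ω - δ₁ := by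
          field_simp
          ring
        rw [← mul_le_mul_iff_right₀ hc₁, key]
        linarith)
    have h2 := mul_le_mul_of_nonneg_left hQ hc₁.le
    rw [mul_add, ← mul_assoc, mul_inv_cancel₀ hc₁.ne', one_mul] at h2
    have : c₁ * (-δ₁ / c₁) = -δ₁ := by field_simp
    linarith
  · exact upperQuantile_emp_mono (fun j => X j ω) (fun j => Y j ω) n hn
      c₂ δ₂ α hc₂ hα0 hα1 (fun j _ => (hω j).2)
end

section
/- Let X_1,…,X_n be an IID bounded sequence with constants c_1, δ_1, c_2, δ_2 (c_1, c_2 > 0) and IID bounding sequence Y_1,…,Y_n, and suppose the values X_1,…,X_n are pairwise distinct and the values Y_1,…,Y_n are pairwise distinct. Then for every α ∈ (0,1) with n·α ∈ ℕ, the empirical lower quantile functions satisfy c_1·Q̂⁻_{Y_n}(α) + δ_1 ≤ Q̂⁻_{X_n}(α) ≤ c_2·Q̂⁻_{Y_n}(α) + δ_2. -/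
open MeasureTheory ProbabilityTheory

lemma emp_set_nonempty (z : ℕ → ℝ) (n : ℕ) (hn : 1 ≤ n) {α : ℝ} (hα : 0 < α) :
    {x | empDistFun z n x < α}.Nonempty := by
  have hne : (Finset.Icc 1 n).Nonempty := ⟨1, by simp [hn]⟩
  refine ⟨(Finset.Icc 1 n).inf' hne z - 1, ?_⟩
  have h0 : empDistFun z n ((Finset.Icc 1 n).inf' hne z - 1) = 0 := by
    unfold empDistFun
    rw [Finset.sum_eq_zero, mul_zero]
    intro j hj
    have := Finset.inf'_le z hj
    rw [if_neg]; linarith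
  simpa [h0] using hα

lemma emp_set_bddAbove (z : ℕ → ℝ) (n : ℕ) (hn : 1 ≤ n) {α : ℝ} (hα : α < 1) :
    BddAbove {x | empDistFun z n x < α} := by
  have hne : (Finset.Icc 1 n).Nonempty := ⟨1, by simp [hn]⟩
  refine ⟨(Finset.Icc 1 n).sup' hne z, fun x hx => ?_⟩
  by_contra hlt
  push_neg at hlt
  have h1 : empDistFun z n x = 1 := by
    unfold empDistFun
    rw [Finset.sum_congr rfl
      (fun j hj => if_pos (le_of_lt (lt_of_le_of_lt (Finset.le_sup' z hj) hlt)))]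
    have hn0 : (n : ℝ) ≠ 0 := by positivity
    simp [Nat.card_Icc]
    field_simp
  rw [Set.mem_setOf_eq, h1] at hx
  linarith

lemma key_quantile_le (a b : ℕ → ℝ) (n : ℕ) (hn : 1 ≤ n) (c d : ℝ) (hc : 0 < c)
    {α : ℝ} (hα : α ∈ Set.Ioo (0 : ℝ) 1)
    (h : ∀ j ∈ Finset.Icc 1 n, a j ≤ c * b j + d) :
    lowerQuantile (empDistFun a n) α ≤ c * lowerQuantile (empDistFun b n) α + d := by
  refine csSup_le (emp_set_nonempty a n hn hα.1) (fun x hx => ?_)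
  set y := (x - d) / c with hy
  have hFb : empDistFun b n y ≤ empDistFun a n x := by
    unfold empDistFun
    apply mul_le_mul_of_nonneg_left _ (by positivity)
    apply Finset.sum_le_sum
    intro j hj
    by_cases hbj : b j ≤ y
    · rw [if_pos hbj, if_pos]
      have : c * b j + d ≤ x := by
        rw [hy] at hbj
        have := (le_div_iff₀ hc).mp hbj
        linarith
      linarith [h j hj]
    · rw [if_neg hbj]
      split <;> norm_num
  have hymem : y ∈ {t | empDistFun b n t < α} := lt_of_le_of_lt hFb hx
  have hyle : y ≤ lowerQuantile (empDistFun b n) α :=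
    le_csSup (emp_set_bddAbove b n hn hα.2) hymem
  have : x = c * y + d := by rw [hy, mul_div_assoc', mul_div_cancel_left₀ _ hc.ne']; ring
  rw [this]
  nlinarith

/-- Lemma `lem:quantile:essentialIID`, lower quantile part: for an IID bounded sequence
`X_1, …, X_n` with bounding sequence `Y_1, …, Y_n` (with pairwise distinct values), for every
`α ∈ (0,1)` with `n·α ∈ ℕ`,
`c₁ Q̂⁻_{Y_n}(α) + δ₁ ≤ Q̂⁻_{X_n}(α) ≤ c₂ Q̂⁻_{Y_n}(α) + δ₂` almost surely. -/
theorem iidBounded_lowerQuantile_comparison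
    {Ω : Type*} [MeasurableSpace Ω] (μ : Measure Ω) [IsProbabilityMeasure μ]
    (X Y : ℕ → Ω → ℝ) (hXmeas : ∀ i, Measurable (X i)) (hYmeas : ∀ i, Measurable (Y i))
    (c₁ δ₁ c₂ δ₂ : ℝ) (hc₁ : 0 < c₁) (hc₂ : 0 < c₂)
    (hXindep : iIndepFun X μ)
    (hYindep : iIndepFun Y μ)
    (hYident : ∀ i j, IdentDistrib (Y i) (Y j) μ μ)
    (hbound : ∀ i, ∀ᵐ ω ∂μ, c₁ * Y i ω + δ₁ ≤ X i ω ∧ X i ω ≤ c₂ * Y i ω + δ₂)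
    (n : ℕ) (hn : 1 ≤ n)
    (hXdistinct : ∀ᵐ ω ∂μ, ∀ i ∈ Finset.Icc 1 n, ∀ j ∈ Finset.Icc 1 n, i ≠ j → X i ω ≠ X j ω)
    (hYdistinct : ∀ᵐ ω ∂μ, ∀ i ∈ Finset.Icc 1 n, ∀ j ∈ Finset.Icc 1 n, i ≠ j → Y i ω ≠ Y j ω)
    (α : ℝ) (hα : α ∈ Set.Ioo (0 : ℝ) 1) (hnα : ∃ k : ℕ, (n : ℝ) * α = k) :
    ∀ᵐ ω ∂μ,
      c₁ * lowerQuantile (empDistFun (fun j => Y j ω) n) α + δ₁ ≤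
          lowerQuantile (empDistFun (fun j => X j ω) n) α ∧
        lowerQuantile (empDistFun (fun j => X j ω) n) α ≤
          c₂ * lowerQuantile (empDistFun (fun j => Y j ω) n) α + δ₂ := by
  have hb : ∀ᵐ ω ∂μ, ∀ i, c₁ * Y i ω + δ₁ ≤ X i ω ∧ X i ω ≤ c₂ * Y i ω + δ₂ :=
      ae_all_iff.2 hbound
  filter_upwards [hb] with ω h
  constructor
  · have hkey := key_quantile_le (fun j => Y j ω) (fun j => X j ω) n hn (1 / c₁) (-(δ₁ / c₁))
      (by positivity) hα (fun j _ => by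
        have hj := (h j).1
        have he : 1 / c₁ * X j ω + -(δ₁ / c₁) = (X j ω - δ₁) / c₁ := by ring
        simp only [he, le_div_iff₀ hc₁]
        nlinarith)
    have he : 1 / c₁ * lowerQuantile (empDistFun (fun j => X j ω) n) α + -(δ₁ / c₁)
        = (lowerQuantile (empDistFun (fun j => X j ω) n) α - δ₁) / c₁ := by ring
    rw [he, le_div_iff₀ hc₁] at hkey
    nlinarith
  · exact key_quantile_le (fun j => X j ω) (fun j => Y j ω) n hn c₂ δ₂ hc₂ hα
      (fun j _ => (h j).2)
end

section
/- Let X_1,…,X_n be an IID bounded sequence with constants c_1, δ_1, c_2, δ_2 (c_1, c_2 > 0) and IID bounding sequence Y_1,…,Y_n, and suppose the values X_1,…,X_n are pairwise distinct and the values Y_1,…,Y_n are pairwise distinct. Then for every α ∈ (0,1) and g ∈ ℝ such that n·(α/2 − g) ∈ ℕ and n·(1 − α/2 + g) ∈ ℕ with α/2 − g and 1 − α/2 + g in (0,1), the interval [Q̂_{Y_n}(α/2 − g), Q̂⁻_{Y_n}(1 − α/2 + g)] is contained in the interval [(Q̂_{X_n}(α/2 − g) − δ_2)/c_2, (Q̂⁻_{X_n}(1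 − α/2 + g) − δ_1)/c_1]. -/
open MeasureTheory ProbabilityTheory

lemma empDistFun_mono_pair (z w : ℕ → ℝ) (n : ℕ) {x y : ℝ}
    (h : ∀ j ∈ Finset.Icc 1 n, z j ≤ x → w j ≤ y) :
    empDistFun z n x ≤ empDistFun w n y := by
  unfold empDistFun
  refine mul_le_mul_of_nonneg_left (Finset.sum_le_sum fun j hj => ?_) (by positivity)
  split_ifs with h1 h2 <;> first | exact absurd (h j hj h1) h2 | norm_num

lemma empDistFun_exists_zero (z : ℕ → ℝ) {n : ℕ} (hn : 1 ≤ n) :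
    ∃ x, empDistFun z n x = 0 := by
  have hne : (Finset.Icc 1 n).Nonempty := ⟨1, by simp [hn]⟩
  refine ⟨(Finset.Icc 1 n).inf' hne z - 1, ?_⟩
  unfold empDistFun
  rw [Finset.sum_eq_zero, mul_zero]
  intro j hj
  rw [if_neg]
  have := Finset.inf'_le z hj
  linarith

lemma empDistFun_one (z : ℕ → ℝ) {n : ℕ} (hn : 1 ≤ n) {x : ℝ}
    (hx : ∀ j ∈ Finset.Icc 1 n, z j ≤ x) : empDistFun z n x = 1 := by
  unfold empDistFun
  rw [Finset.sum_congr rfl fun j hj => if_pos (hx j hj), Finset.sum_const, Nat.card_Icc]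
  have hn0 : (n : ℝ) ≠ 0 := Nat.cast_ne_zero.2 (by omega)
  simp
  field_simp

lemma quantSet_bddAbove (z : ℕ → ℝ) {n : ℕ} (hn : 1 ≤ n) {p : ℝ} (hp : p < 1) :
    BddAbove {x | empDistFun z n x ≤ p} := by
  have hne : (Finset.Icc 1 n).Nonempty := ⟨1, by simp [hn]⟩
  refine ⟨(Finset.Icc 1 n).sup' hne z, fun a ha => ?_⟩
  by_contra hM
  push_neg at hM
  have h1 : empDistFun z n a = 1 :=
    empDistFun_one z hn fun j hj => (Finset.le_sup' z hj).trans hM.le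
  rw [Set.mem_setOf_eq, h1] at ha
  linarith

/-- The covering step in the proof of Theorem `thm:essentialIID`: the interval
`[Q̂_{Y_n}(α/2 - g), Q̂⁻_{Y_n}(1 - α/2 + g)]` is contained in the observable interval
`[(Q̂_{X_n}(α/2 - g) - δ₂)/c₂, (Q̂⁻_{X_n}(1 - α/2 + g) - δ₁)/c₁]` almost surely. -/
theorem iidBounded_interval_covering
    {Ω : Type*} [MeasurableSpace Ω] (μ : Measure Ω) [IsProbabilityMeasure μ]
    (X Y : ℕ → Ω → ℝ) (hXmeas : ∀ i, Measurable (X i)) (hYmeas : ∀ i, Measurable (Y i))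
    (c₁ δ₁ c₂ δ₂ : ℝ) (hc₁ : 0 < c₁) (hc₂ : 0 < c₂)
    (hXindep : iIndepFun X μ)
    (hYindep : iIndepFun Y μ)
    (hYident : ∀ i j, IdentDistrib (Y i) (Y j) μ μ)
    (hbound : ∀ i, ∀ᵐ ω ∂μ, c₁ * Y i ω + δ₁ ≤ X i ω ∧ X i ω ≤ c₂ * Y i ω + δ₂)
    (n : ℕ) (hn : 1 ≤ n)
    (hXdistinct : ∀ᵐ ω ∂μ, ∀ i ∈ Finset.Icc 1 n, ∀ j ∈ Finset.Icc 1 n, i ≠ j → X i ω ≠ X j ω)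
    (hYdistinct : ∀ᵐ ω ∂μ, ∀ i ∈ Finset.Icc 1 n, ∀ j ∈ Finset.Icc 1 n, i ≠ j → Y i ω ≠ Y j ω)
    (α g : ℝ) (hα : α ∈ Set.Ioo (0 : ℝ) 1)
    (hlo : α / 2 - g ∈ Set.Ioo (0 : ℝ) 1) (hhi : 1 - α / 2 + g ∈ Set.Ioo (0 : ℝ) 1)
    (hnlo : ∃ k : ℕ, (n : ℝ) * (α / 2 - g) = k)
    (hnhi : ∃ k : ℕ, (n : ℝ) * (1 - α / 2 + g) = k) :
    ∀ᵐ ω ∂μ,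
      Set.Icc (upperQuantile (empDistFun (fun j => Y j ω) n) (α / 2 - g))
          (lowerQuantile (empDistFun (fun j => Y j ω) n) (1 - α / 2 + g)) ⊆
        Set.Icc ((upperQuantile (empDistFun (fun j => X j ω) n) (α / 2 - g) - δ₂) / c₂)
          ((lowerQuantile (empDistFun (fun j => X j ω) n) (1 - α / 2 + g) - δ₁) / c₁) := by
  have hae : ∀ᵐ ω ∂μ, ∀ i, c₁ * Y i ω + δ₁ ≤ X i ω ∧ X i ω ≤ c₂ * Y i ω + δ₂ :=
    ae_all_iff.2 hbound
  obtain ⟨hp0, hp1⟩ := hlo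
  obtain ⟨hq0, hq1⟩ := hhi
  filter_upwards [hae] with ω hω
  set p := α / 2 - g with hp
  set q := 1 - α / 2 + g with hq
  set FX := empDistFun (fun j => X j ω) n with hFX
  set FY := empDistFun (fun j => Y j ω) n with hFY
  obtain ⟨x₀, hx₀⟩ := empDistFun_exists_zero (fun j => X j ω) hn
  obtain ⟨y₀, hy₀⟩ := empDistFun_exists_zero (fun j => Y j ω) hn
  have hSXne : {x | FX x ≤ p}.Nonempty := ⟨x₀, by simp only [Set.mem_setOf_eq, hFX, hx₀]; linarith⟩
  have hTYne : {x | FY x < q}.Nonempty := ⟨y₀, by simp only [Set.mem_setOf_eq, hFY, hy₀]; linarith⟩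
  have hSYbdd : BddAbove {x | FY x ≤ p} := quantSet_bddAbove _ hn hp1
  have hsub : {x | FX x < q} ⊆ {x | FX x ≤ q} := fun x hx => Set.mem_setOf_eq ▸ le_of_lt hx
  have hTXbdd : BddAbove {x | FX x < q} :=
    BddAbove.mono hsub (quantSet_bddAbove (fun j => X j ω) hn hq1)
  have h1 : upperQuantile FX p ≤ c₂ * upperQuantile FY p + δ₂ := by
    refine csSup_le hSXne fun x hx => ?_
    have hy : FY ((x - δ₂) / c₂) ≤ p := by
      refine le_trans (empDistFun_mono_pair _ _ n fun j hj hz => ?_) hx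
      rw [le_div_iff₀ hc₂] at hz
      have := (hω j).2
      linarith
    have hle : (x - δ₂) / c₂ ≤ upperQuantile FY p := le_csSup hSYbdd hy
    rw [div_le_iff₀ hc₂] at hle
    unfold upperQuantile at hle ⊢
    linarith
  have h2 : lowerQuantile FY q ≤ (lowerQuantile FX q - δ₁) / c₁ := by
    refine csSup_le hTYne fun y hy => ?_
    have hx : FX (c₁ * y + δ₁) < q := by
      refine lt_of_le_of_lt (empDistFun_mono_pair _ _ n fun j hj hz => ?_) hy
      have := (hω j).1
      have hyy : c₁ * Y j ω ≤ c₁ * y := by linarith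
      exact le_of_mul_le_mul_left hyy hc₁
    have hle : c₁ * y + δ₁ ≤ lowerQuantile FX q := le_csSup hTXbdd hx
    rw [le_div_iff₀ hc₁]
    linarith
  refine Set.Icc_subset_Icc ?_ h2
  rw [div_le_iff₀ hc₂]
  linarith
end
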